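/- Let G : C ⟶ D be a dagger functor between dagger categories, let F : C ⟶ D be any functor, and let σ : F ⟹ G be a natural transformation whose components are dagger monomorphisms (σ_A† ∘ σ_A = id). Then F is a dagger functor, i.e. F(f†) = F(f)† for all morphisms f. -/
import Mathlib


open CategoryTheory

/-- A dagger on a category: an involutive, identity-on-objects, contravariant endofunctor. -/
class DaggerCategory (C : Type*) [Category C] where
  dag : ∀ {A B : C}, (A ⟶ B) → (B ⟶ A)
  dag_id : ∀ (A : C), dag (𝟙 A) = 𝟙 A
  dag_comp : ∀ {A B D : C} (f : A ⟶ B) (g : B ⟶ D), dag (f ≫ g) = dag g ≫ dag f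
  dag_dag : ∀ {A B : C} (f : A ⟶ B), dag (dag f) = f

open DaggerCategory
/-- If `G` is a dagger functor and `σ : F ⟶ G` is pointwise dagger monic,
then `F` is a dagger functor. -/
theorem dagger_functor_of_pointwise_dagger_mono {C D : Type*} [Category C] [Category D]
    [DaggerCategory C] [DaggerCategory D] (F G : C ⥤ D)
    (hG : ∀ {A B : C} (f : A ⟶ B), G.map (dag f) = dag (G.map f))
    (σ : F ⟶ G) (hσ : ∀ A : C, σ.app A ≫ dag (σ.app A) = 𝟙 (F.obj A)) :
    ∀ {A B : C} (f : A ⟶ B), F.map (dag f) = dag (F.map f) := by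
  intro A B f
  calc F.map (dag f) = F.map (dag f) ≫ (σ.app A ≫ dag (σ.app A)) := by rw [hσ]; simp
    _ = (σ.app B ≫ G.map (dag f)) ≫ dag (σ.app A) := by rw [← Category.assoc, σ.naturality]
    _ = σ.app B ≫ dag (σ.app A ≫ G.map f) := by
        rw [hG, dag_comp, Category.assoc]
    _ = σ.app B ≫ dag (F.map f ≫ σ.app B) := by rw [σ.naturality]
    _ = (σ.app B ≫ dag (σ.app B)) ≫ dag (F.map f) := by rw [dag_comp, Category.assoc]
    _ = dag (F.map f) := by rw [hσ]; simp
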